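/- Let Ω = {(x, y) ∈ ℝ^n × ℝ^n : y ≥ 0 and x_i y_i = 0 for all i}. For every (x̄, ȳ) ∈ Ω one has T_Ω(x̄, ȳ)° = D_Ω(x̄, ȳ)°, where D_Ω(x̄, ȳ) = {(u, v) ∈ ℝ^n × ℝ^n : v_i ≥ 0 for every i with ȳ_i = 0, and ȳ_i u_i + x̄_i v_i = 0 for all i}. That is, Guignard's constraint qualification holds at every point of Ω for the constraints −y ≤ 0, x * y = 0. -/

import Mathlib

open Filter Topology
open scoped RealInnerProductSpace

noncomputable section

/-- The (Bouligand) tangent cone of a set `S` at `x`. -/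
def tangentConeSeq {N : Type*} [NormedAddCommGroup N] [NormedSpace ℝ N]
    (S : Set N) (x : N) : Set N :=
  {d | ∃ (u : ℕ → N) (t : ℕ → ℝ), (∀ k, u k ∈ S) ∧ (∀ k, 0 < t k) ∧
    Tendsto t atTop (𝓝 0) ∧ Tendsto (fun k => (t k)⁻¹ • (u k - x)) atTop (𝓝 d)}

/-- Polar cone of a subset of a product of two inner product spaces
(the inner product of the product being the sum of the factor inner products). -/
def polarConeProd {N M : Type*} [NormedAddCommGroup N] [InnerProductSpace ℝ N]
    [NormedAddCommGroup M] [InnerProductSpace ℝ M] (S : Set (N × M)) : Set (N × M) :=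
  {q | ∀ s ∈ S, ⟪q.1, s.1⟫ + ⟪q.2, s.2⟫ ≤ 0}

/-- If the ray `x + t • d` stays in `S` for `t = c/(k+1)`, then `d` is tangent. -/
lemma ray_mem_tangentConeSeq {N : Type*} [NormedAddCommGroup N] [NormedSpace ℝ N]
    {S : Set N} {x : N} (d : N) {c : ℝ} (hc : 0 < c)
    (h : ∀ k : ℕ, x + (c / ((k : ℝ) + 1)) • d ∈ S) :
    d ∈ tangentConeSeq S x := by
  have ht : ∀ k : ℕ, (0 : ℝ) < c / ((k : ℝ) + 1) := fun k => by positivity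
  refine ⟨fun k => x + (c / ((k : ℝ) + 1)) • d, fun k => c / ((k : ℝ) + 1), h, ht, ?_, ?_⟩
  · have := tendsto_one_div_add_atTop_nhds_zero_nat.const_mul c
    simpa [div_eq_mul_inv] using this
  · have : (fun k : ℕ => (c / ((k : ℝ) + 1))⁻¹ • (x + (c / ((k : ℝ) + 1)) • d - x))
        = fun _ => d := by
      funext k
      rw [add_sub_cancel_left, smul_smul, inv_mul_cancel₀ (ht k).ne', one_smul]
    rw [this]; exact tendsto_const_nhds

/-- Componentwise extraction of a limit in a product of Euclidean spaces (first factor). -/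
lemma tendsto_eval_fst {n : ℕ} {f : ℕ → EuclideanSpace ℝ (Fin n) × EuclideanSpace ℝ (Fin n)}
    {p : EuclideanSpace ℝ (Fin n) × EuclideanSpace ℝ (Fin n)}
    (h : Tendsto f atTop (𝓝 p)) (i : Fin n) :
    Tendsto (fun k => (f k).1 i) atTop (𝓝 (p.1 i)) := by
  have hc : Continuous fun q : EuclideanSpace ℝ (Fin n) × EuclideanSpace ℝ (Fin n) =>
      (EuclideanSpace.proj (𝕜 := ℝ) i) q.1 :=
    (EuclideanSpace.proj (𝕜 := ℝ) i).continuous.comp continuous_fst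
  simpa [Function.comp_def] using (hc.tendsto p).comp h

lemma tendsto_eval_snd {n : ℕ} {f : ℕ → EuclideanSpace ℝ (Fin n) × EuclideanSpace ℝ (Fin n)}
    {p : EuclideanSpace ℝ (Fin n) × EuclideanSpace ℝ (Fin n)}
    (h : Tendsto f atTop (𝓝 p)) (i : Fin n) :
    Tendsto (fun k => (f k).2 i) atTop (𝓝 (p.2 i)) := by
  have hc : Continuous fun q : EuclideanSpace ℝ (Fin n) × EuclideanSpace ℝ (Fin n) =>
      (EuclideanSpace.proj (𝕜 := ℝ) i) q.2 :=
    (EuclideanSpace.proj (𝕜 := ℝ) i).continuous.comp continuous_snd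
  simpa [Function.comp_def] using (hc.tendsto p).comp h

/-- Every tangent direction to `Ω` satisfies the linearized constraints. -/
lemma tangent_subset_lin {n : ℕ} (xb yb : EuclideanSpace ℝ (Fin n))
    (hfeas : (∀ i, 0 ≤ yb i) ∧ (∀ i, xb i * yb i = 0)) :
    tangentConeSeq
        {q : EuclideanSpace ℝ (Fin n) × EuclideanSpace ℝ (Fin n) |
          (∀ i, 0 ≤ q.2 i) ∧ (∀ i, q.1 i * q.2 i = 0)} (xb, yb)
      ⊆ {d : EuclideanSpace ℝ (Fin n) × EuclideanSpace ℝ (Fin n) |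
          (∀ i, yb i = 0 → 0 ≤ d.2 i) ∧ (∀ i, yb i * d.1 i + xb i * d.2 i = 0)} := by
  rintro d ⟨u, t, hu, ht, ht0, hconv⟩
  -- componentwise difference quotients
  have ha : ∀ i, Tendsto (fun k => (t k)⁻¹ * ((u k).1 i - xb i)) atTop (𝓝 (d.1 i)) := by
    intro i
    have := tendsto_eval_fst hconv i
    simpa [Prod.fst_sub, PiLp.smul_apply, PiLp.sub_apply, smul_eq_mul] using this
  have hb : ∀ i, Tendsto (fun k => (t k)⁻¹ * ((u k).2 i - yb i)) atTop (𝓝 (d.2 i)) := by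
    intro i
    have := tendsto_eval_snd hconv i
    simpa [Prod.snd_sub, PiLp.smul_apply, PiLp.sub_apply, smul_eq_mul] using this
  -- u tends to (xb, yb)
  have hu0 : Tendsto u atTop (𝓝 (xb, yb)) := by
    have h2 : Tendsto (fun k => u k - (xb, yb)) atTop (𝓝 0) := by
      have heq : (fun k => u k - (xb, yb))
          = fun k => t k • ((t k)⁻¹ • (u k - (xb, yb))) := by
        funext k; rw [smul_smul, mul_inv_cancel₀ (ht k).ne', one_smul]
      rw [heq]
      simpa using ht0.smul hconv
    simpa using h2.add_const (xb, yb)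
  have hy : ∀ i, Tendsto (fun k => (u k).2 i) atTop (𝓝 (yb i)) :=
    fun i => tendsto_eval_snd hu0 i
  constructor
  · intro i hyi
    refine ge_of_tendsto' (hb i) fun k => ?_
    have h1 : 0 ≤ (u k).2 i := (hu k).1 i
    have : (0 : ℝ) ≤ (u k).2 i - yb i := by rw [hyi]; simpa using h1
    exact mul_nonneg (inv_nonneg.2 (ht k).le) this
  · intro i
    have hfk : ∀ k, (u k).2 i * ((t k)⁻¹ * ((u k).1 i - xb i))
        + xb i * ((t k)⁻¹ * ((u k).2 i - yb i)) = 0 := by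
      intro k
      have h1 : (u k).1 i * (u k).2 i = 0 := (hu k).2 i
      have h2 : xb i * yb i = 0 := hfeas.2 i
      have : (u k).2 i * ((t k)⁻¹ * ((u k).1 i - xb i))
          + xb i * ((t k)⁻¹ * ((u k).2 i - yb i))
          = (t k)⁻¹ * ((u k).1 i * (u k).2 i - xb i * yb i) := by ring
      rw [this, h1, h2, sub_zero, mul_zero]
    have hlim : Tendsto (fun k => (u k).2 i * ((t k)⁻¹ * ((u k).1 i - xb i))
        + xb i * ((t k)⁻¹ * ((u k).2 i - yb i))) atTop
        (𝓝 (yb i * d.1 i + xb i * d.2 i)) :=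
      ((hy i).mul (ha i)).add (tendsto_const_nhds.mul (hb i))
    have hlim' : Tendsto (fun _ : ℕ => (0 : ℝ)) atTop (𝓝 (yb i * d.1 i + xb i * d.2 i)) := by
      simpa only [hfk] using hlim
    exact (tendsto_nhds_unique hlim' tendsto_const_nhds)

theorem guignard_complementarity_constraints {n : ℕ}
    (xb yb : EuclideanSpace ℝ (Fin n))
    (hfeas : (∀ i, 0 ≤ yb i) ∧ (∀ i, xb i * yb i = 0)) :
    polarConeProd (tangentConeSeq
        {q : EuclideanSpace ℝ (Fin n) × EuclideanSpace ℝ (Fin n) |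
          (∀ i, 0 ≤ q.2 i) ∧ (∀ i, q.1 i * q.2 i = 0)} (xb, yb))
      = polarConeProd
        {d : EuclideanSpace ℝ (Fin n) × EuclideanSpace ℝ (Fin n) |
          (∀ i, yb i = 0 → 0 ≤ d.2 i) ∧ (∀ i, yb i * d.1 i + xb i * d.2 i = 0)} := by
  have hinner : ∀ (a b : EuclideanSpace ℝ (Fin n)), ⟪a, b⟫ = ∑ i, a i * b i := by
    intro a b
    simp [PiLp.inner_apply, RCLike.inner_apply, conj_trivial, mul_comm]
  have hsingle : ∀ (a : EuclideanSpace ℝ (Fin n)) (i : Fin n) (c : ℝ),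
      ⟪a, EuclideanSpace.single i c⟫ = a i * c := by
    intro a i c
    rw [hinner]
    simp [EuclideanSpace.single_apply]
  -- the set Ω
  set Ω : Set (EuclideanSpace ℝ (Fin n) × EuclideanSpace ℝ (Fin n)) :=
    {q | (∀ i, 0 ≤ q.2 i) ∧ (∀ i, q.1 i * q.2 i = 0)} with hΩ
  ext q
  constructor
  · -- T° ⊆ D°
    intro hq
    -- basic tangent directions
    have hdir1 : ∀ (i : Fin n) (c : ℝ), yb i = 0 →
        ((EuclideanSpace.single i c, 0) :
          EuclideanSpace ℝ (Fin n) × EuclideanSpace ℝ (Fin n))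
          ∈ tangentConeSeq Ω (xb, yb) := by
      intro i c hyi
      refine ray_mem_tangentConeSeq _ (one_pos) fun k => ?_
      constructor
      · intro j
        simpa using hfeas.1 j
      · intro j
        by_cases hj : j = i
        · subst hj
          simp [hyi]
        · simp [EuclideanSpace.single_apply, hj, hfeas.2 j]
    have hdir2 : ∀ (i : Fin n) (c : ℝ), c = 1 ∨ c = -1 → yb i ≠ 0 →
        (((0 : EuclideanSpace ℝ (Fin n)), EuclideanSpace.single i c) :
          EuclideanSpace ℝ (Fin n) × EuclideanSpace ℝ (Fin n))
          ∈ tangentConeSeq Ω (xb, yb) := by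
      intro i c hc hyi
      have hypos : 0 < yb i := lt_of_le_of_ne (hfeas.1 i) (Ne.symm hyi)
      have hxi : xb i = 0 := by
        rcases mul_eq_zero.1 (hfeas.2 i) with h | h
        · exact h
        · exact absurd h hyi
      refine ray_mem_tangentConeSeq _ hypos fun k => ?_
      have hk1 : (1 : ℝ) ≤ (k : ℝ) + 1 := by
        have : (0 : ℝ) ≤ (k : ℝ) := Nat.cast_nonneg k
        linarith
      constructor
      · intro j
        by_cases hj : j = i
        · subst hj
          rcases hc with rfl | rfl
          · simp only [Prod.snd_add, Prod.smul_snd, PiLp.add_apply, PiLp.smul_apply,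
              EuclideanSpace.single_apply, eq_self_iff_true, if_true, smul_eq_mul, mul_one]
            positivity
          · simp only [Prod.snd_add, Prod.smul_snd, PiLp.add_apply, PiLp.smul_apply,
              EuclideanSpace.single_apply, eq_self_iff_true, if_true, smul_eq_mul]
            have hle : yb j / ((k : ℝ) + 1) ≤ yb j := by
              rw [div_le_iff₀ (by linarith : (0:ℝ) < (k:ℝ)+1)]
              nlinarith
            nlinarith
        · simp [EuclideanSpace.single_apply, hj, hfeas.1 j]
      · intro j
        by_cases hj : j = i
        · subst hj
          simp [hxi]
        · simp [EuclideanSpace.single_apply, hj, hfeas.2 j]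
    have hdir3 : ∀ (i : Fin n), yb i = 0 → xb i = 0 →
        (((0 : EuclideanSpace ℝ (Fin n)), EuclideanSpace.single i 1) :
          EuclideanSpace ℝ (Fin n) × EuclideanSpace ℝ (Fin n))
          ∈ tangentConeSeq Ω (xb, yb) := by
      intro i hyi hxi
      refine ray_mem_tangentConeSeq _ (one_pos) fun k => ?_
      constructor
      · intro j
        by_cases hj : j = i
        · subst hj
          simp only [Prod.snd_add, Prod.smul_snd, PiLp.add_apply, PiLp.smul_apply,
            EuclideanSpace.single_apply, eq_self_iff_true, if_true, smul_eq_mul, mul_one]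
          have h0 : (0:ℝ) < 1 / ((k : ℝ) + 1) := by positivity
          have := hfeas.1 j
          linarith
        · simp [EuclideanSpace.single_apply, hj, hfeas.1 j]
      · intro j
        by_cases hj : j = i
        · subst hj
          simp [hxi]
        · simp [EuclideanSpace.single_apply, hj, hfeas.2 j]
    -- derived sign facts about q
    have hp0 : ∀ i, yb i = 0 → q.1 i = 0 := by
      intro i hyi
      have h1 := hq _ (hdir1 i 1 hyi)
      have h2 := hq _ (hdir1 i (-1) hyi)
      rw [hsingle] at h1 h2
      simp only [inner_zero_right] at h1 h2
      linarith
    have hq0 : ∀ i, yb i ≠ 0 → q.2 i = 0 := by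
      intro i hyi
      have h1 := hq _ (hdir2 i 1 (Or.inl rfl) hyi)
      have h2 := hq _ (hdir2 i (-1) (Or.inr rfl) hyi)
      rw [hsingle] at h1 h2
      simp only [inner_zero_right] at h1 h2
      linarith
    have hqle : ∀ i, yb i = 0 → xb i = 0 → q.2 i ≤ 0 := by
      intro i hyi hxi
      have h1 := hq _ (hdir3 i hyi hxi)
      rw [hsingle] at h1
      simp only [inner_zero_right] at h1
      linarith
    -- conclude q ∈ D°
    intro s hs
    obtain ⟨hs1, hs2⟩ := hs
    rw [hinner, hinner, ← Finset.sum_add_distrib]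
    refine Finset.sum_nonpos fun i _ => ?_
    by_cases hyi : yb i = 0
    · rw [hp0 i hyi, zero_mul, zero_add]
      by_cases hxi : xb i = 0
      · exact mul_nonpos_of_nonpos_of_nonneg (hqle i hyi hxi) (hs1 i hyi)
      · have := hs2 i
        rw [hyi, zero_mul, zero_add] at this
        have hs2i : s.2 i = 0 := by
          rcases mul_eq_zero.1 this with h | h
          · exact absurd h hxi
          · exact h
        rw [hs2i, mul_zero]
    · have hxi : xb i = 0 := by
        rcases mul_eq_zero.1 (hfeas.2 i) with h | h
        · exact h
        · exact absurd h hyi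
      have := hs2 i
      rw [hxi, zero_mul, add_zero] at this
      have hs1i : s.1 i = 0 := by
        rcases mul_eq_zero.1 this with h | h
        · exact absurd h hyi
        · exact h
      rw [hq0 i hyi, hs1i, mul_zero, zero_mul, add_zero]
  · -- D° ⊆ T°
    intro hq s hs
    exact hq s (tangent_subset_lin xb yb hfeas hs)
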